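/- Let f : (X, p̄) → (Y, q̄) be a stratified map between stratified perverse spaces satisfying f*Dq̄ ≤ Dp̄ (i.e. Dq̄(S^f) ≤ Dp̄(S) for every stratum S of X). Then σ ↦ f ∘ σ on filtered simplices induces a morphism of chain complexes f_* : C_*^{p̄}(X;G) → C_*^{q̄}(Y;G). -/

import Mathlib

noncomputable section
open Set

universe u v w


/-- A filtered space of formal dimension `dim` : closed subspaces
`∅ = X_{-1} ⊆ X_0 ⊆ … ⊆ X_n = X` with `X_n \ X_{n-1} ≠ ∅`. -/
structure FilteredSpace (X : Type u) [TopologicalSpace X] : Type u where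
  dim : ℕ
  filt : ℤ → Set X
  filt_neg : ∀ i : ℤ, i < 0 → filt i = ∅
  filt_mono : Monotone filt
  filt_closed : ∀ i, IsClosed (filt i)
  filt_top : ∀ i : ℤ, (dim : ℤ) ≤ i → filt i = Set.univ
  reg_nonempty : (filt dim \ filt ((dim : ℤ) - 1)).Nonempty

namespace FilteredSpace

variable {X : Type u} {Y : Type v} [TopologicalSpace X] [TopologicalSpace Y]

/-- `S` is a stratum of formal dimension `i` : a connected component of `X_i \ X_{i-1}`. -/
def IsStratumDim (F : FilteredSpace X) (S : Set X) (i : ℤ) : Prop :=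
  ∃ x ∈ F.filt i \ F.filt (i-1), S = connectedComponentIn (F.filt i \ F.filt (i-1)) x

/-- `S` is a stratum of the filtered space. -/
def IsStratum (F : FilteredSpace X) (S : Set X) : Prop := ∃ i, F.IsStratumDim S i

open Classical in
/-- The formal dimension of a stratum. -/
def stratumDim (F : FilteredSpace X) (S : Set X) : ℤ :=
  if h : ∃ i, F.IsStratumDim S i then h.choose else 0

/-- The codimension of a stratum : `dim X - dim S`. -/
def codim (F : FilteredSpace X) (S : Set X) : ℤ := (F.dim : ℤ) - F.stratumDim S

/-- A regular stratum : one contained in `X_n \ X_{n-1}`. -/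
def IsRegularStratum (F : FilteredSpace X) (S : Set X) : Prop :=
  F.IsStratumDim S (F.dim : ℤ)

/-- A singular stratum. -/
def IsSingularStratum (F : FilteredSpace X) (S : Set X) : Prop :=
  F.IsStratum S ∧ ¬ F.IsRegularStratum S

/-- The singular set `Σ = X_{n-1}`. -/
def sing (F : FilteredSpace X) : Set X := F.filt ((F.dim : ℤ) - 1)

/-- A perversity on a filtered space : a function on strata (here, defined on all
subsets) vanishing on regular strata. -/
def IsPerversity (F : FilteredSpace X) (p : Set X → ℤ) : Prop :=
  ∀ S, F.IsRegularStratum S → p S = 0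

/-- The top perversity `t̄ (S) = codim S - 2`. -/
def topPerv (F : FilteredSpace X) : Set X → ℤ := fun S => F.codim S - 2

open Classical in
/-- The dual perversity `D p̄ = t̄ - p̄` (vanishing on regular strata). -/
def dualPerv (F : FilteredSpace X) (p : Set X → ℤ) : Set X → ℤ :=
  fun S => if F.IsRegularStratum S then 0 else F.codim S - 2 - p S

/-- A stratified map between filtered spaces: each stratum of the source is sent into
a stratum of the target of smaller or equal codimension. -/
def IsStratifiedMap (F : FilteredSpace X) (F' : FilteredSpace Y) (f : X → Y) : Prop :=
  Continuous f ∧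
    ∀ S, F.IsStratum S → ∃ T, F'.IsStratum T ∧ f '' S ⊆ T ∧ F'.codim T ≤ F.codim S

end FilteredSpace

/-! ## Topological simplices, filtered simplices -/

/-- The standard topological `m`-simplex. -/
abbrev TSimp (m : ℕ) : Set (Fin (m+1) → ℝ) := stdSimplex ℝ (Fin (m+1))

/-- The number of nonzero barycentric coordinates of a point of the `m`-simplex;
`t` belongs to the `d`-skeleton iff `suppCard t ≤ d + 1`. -/
def suppCard {m : ℕ} (t : TSimp m) : ℕ :=
  @Finset.card _ (@Finset.filter _ (fun j => (t : Fin (m+1) → ℝ) j ≠ 0)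
    (Classical.decPred _) Finset.univ)

/-- The `j`-th face embedding of standard simplices. -/
def faceMap (m : ℕ) (j : Fin (m+2)) : C(TSimp m, TSimp (m+1)) where
  toFun t := ⟨Fin.insertNth j 0 t.1, by
    refine ⟨fun k => ?_, ?_⟩
    · refine Fin.succAboveCases j ?_ ?_ k
      · rw [Fin.insertNth_apply_same]
      · intro l; rw [Fin.insertNth_apply_succAbove]; exact t.2.1 l
    · rw [Fin.sum_univ_succAbove _ j, Fin.insertNth_apply_same]
      simp only [Fin.insertNth_apply_succAbove]
      rw [zero_add]; exact t.2.2⟩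
  continuous_toFun := by
    apply Continuous.subtype_mk
    exact continuous_const.finInsertNth j continuous_subtype_val

/-- The `j`-th vertex of the standard `m`-simplex. -/
def vert (m : ℕ) (j : Fin (m+1)) : TSimp m :=
  ⟨fun i => if i = j then 1 else 0, by
    refine ⟨fun k => ?_, ?_⟩
    · dsimp only; split <;> norm_num
    · classical
      simp [Finset.sum_ite_eq']⟩


/-! ## Generic homology of constraint systems on chain groups -/

section generic

variable {C : ℕ → Type w} [∀ m, AddCommGroup (C m)]
variable {D : ℕ → Type v} [∀ m, AddCommGroup (D m)]

/-- Relative cycles: chains of `A` whose boundary lies in `B`. -/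
def relCycles (d : ∀ m, C m →+ C (m-1)) (A B : ∀ m, AddSubgroup (C m)) (m : ℕ) :
    AddSubgroup (C m) :=
  A m ⊓ (B (m-1)).comap (d m)

/-- Relative boundaries: boundaries of chains of `A`, together with chains of `B`. -/
def relBnds (d : ∀ m, C m →+ C (m-1)) (A B : ∀ m, AddSubgroup (C m)) (m : ℕ) :
    AddSubgroup (C m) :=
  (A (m+1)).map (d (m+1)) ⊔ B m

/-- Relative homology of the pair of constraint systems `(A, B)`. -/
abbrev relHomology (d : ∀ m, C m →+ C (m-1)) (A B : ∀ m, AddSubgroup (C m)) (m : ℕ) :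
    Type w :=
  relCycles d A B m ⧸
    ((relBnds d A B m ⊓ relCycles d A B m).addSubgroupOf (relCycles d A B m))

/-- The homology class of a relative cycle. -/
def hcl (d : ∀ m, C m →+ C (m-1)) (A B : ∀ m, AddSubgroup (C m)) {m : ℕ}
    (ξ : C m) (h : ξ ∈ relCycles d A B m) : relHomology d A B m :=
  QuotientAddGroup.mk (⟨ξ, h⟩ : relCycles d A B m)

/-- `f` induces an isomorphism in homology, compatibly with classes of cycles. -/
def InducesIso (d : ∀ m, C m →+ C (m-1)) (A B : ∀ m, AddSubgroup (C m))
    (d' : ∀ m, D m →+ D (m-1)) (A' B' : ∀ m, AddSubgroup (D m)) (m : ℕ)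
    (f : C m →+ D m) : Prop :=
  ∃ φ : relHomology d A B m ≃+ relHomology d' A' B' m,
    ∀ (ξ : C m) (h : ξ ∈ relCycles d A B m) (h' : f ξ ∈ relCycles d' A' B' m),
      φ (hcl d A B ξ h) = hcl d' A' B' (f ξ) h'

/-- The homomorphism induced in homology by an inclusion of constraint systems. -/
def inclInduced (d : ∀ m, C m →+ C (m-1)) (A B A' B' : ∀ m, AddSubgroup (C m))
    (hA : ∀ m, A m ≤ A' m) (hB : ∀ m, B m ≤ B' m) (m : ℕ) :
    relHomology d A B m →+ relHomology d A' B' m := by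
  have hZ : relCycles d A B m ≤ relCycles d A' B' m := by
    rintro ξ ⟨h1, h2⟩
    exact ⟨hA _ h1, hB _ h2⟩
  refine QuotientAddGroup.map _ _ (AddSubgroup.inclusion hZ) ?_
  intro x hx
  rw [AddSubgroup.mem_addSubgroupOf] at hx
  rw [AddSubgroup.mem_comap, AddSubgroup.mem_addSubgroupOf, AddSubgroup.coe_inclusion]
  refine ⟨?_, hZ x.2⟩
  exact (sup_le_sup (AddSubgroup.map_mono (hA _)) (hB _) : _ ≤ relBnds d A' B' m) hx.1

end generic

/-! ## Filtered simplices and their chain complexes -/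

/-- A simplex of `X` together with a block assignment of its vertices:
a candidate filtered simplex, the blocks recording the join decomposition
`Δ = Δ_0 ∗ ⋯ ∗ Δ_n`. -/
structure PreSimplex (X : Type u) [TopologicalSpace X] (m : ℕ) : Type u where
  map : C(TSimp m, X)
  block : Fin (m+1) → ℤ

variable {X : Type u} {Y : Type v} [TopologicalSpace X] [TopologicalSpace Y]

/-- The `j`-th face of a pre-simplex. -/
def PreSimplex.face {m : ℕ} (σ : PreSimplex X (m+1)) (j : Fin (m+2)) : PreSimplex X m :=
  ⟨σ.map.comp (faceMap m j), σ.block ∘ j.succAbove⟩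

/-- A generator system for chain complexes: generators and face operators. -/
structure SimpSystem : Type (u+1) where
  Gen : ℕ → Type u
  face : ∀ m : ℕ, Fin (m+2) → Gen (m+1) → Gen m

/-- The system of pre-filtered simplices of `X`. -/
abbrev filtSys (X : Type u) [TopologicalSpace X] : SimpSystem.{u} where
  Gen m := PreSimplex X m
  face _ j σ := σ.face j

/-- The system of all singular simplices of `X`. -/
abbrev singSys (X : Type u) [TopologicalSpace X] : SimpSystem.{u} where
  Gen m := C(TSimp m, X)
  face m j σ := σ.comp (faceMap m j)

namespace SimpSystem

variable (S : SimpSystem.{u}) (G : Type w) [AddCommGroup G]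

/-- Chains on the generators of `S`, with coefficients in `G`. -/
abbrev Chains (m : ℕ) : Type _ := S.Gen m →₀ G

/-- The boundary operator. -/
def bdry (m : ℕ) : S.Chains G (m+1) →+ S.Chains G m :=
  Finsupp.liftAddHom fun σ =>
    ∑ j : Fin (m+2), (-1 : ℤ) ^ (j : ℕ) • Finsupp.singleAddHom (S.face m j σ)

/-- The boundary operator, vanishing in degree `0`. -/
def bdryFrom : ∀ m : ℕ, S.Chains G m →+ S.Chains G (m-1)
  | 0 => 0
  | (m+1) => S.bdry G m

/-- The subgroup of chains all of whose simplices satisfy `P`. -/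
def suppIn {m : ℕ} (P : S.Gen m → Prop) : AddSubgroup (S.Chains G m) where
  carrier := {ξ | ∀ σ ∈ ξ.support, P σ}
  zero_mem' := by intro σ h; simp at h
  add_mem' := by
    classical
    intro a b ha hb σ h
    rcases Finset.mem_union.mp (Finsupp.support_add h) with h' | h'
    exacts [ha σ h', hb σ h']
  neg_mem' := by
    intro a ha σ h
    rw [Finsupp.support_neg] at h
    exact ha σ h

end SimpSystem

/-! ## Admissibility -/

/-- A singular simplex is `p`-admissible when, for every stratum `S`, the preimage
of `S` is contained in the skeleton of dimension `dim Δ - codim S + p S`. -/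
def MapAdmissible (F : FilteredSpace X) (p : Set X → ℤ) {m : ℕ} (τ : C(TSimp m, X)) : Prop :=
  ∀ S : Set X, F.IsStratum S → ∀ t : TSimp m, τ t ∈ S →
    (suppCard t : ℤ) ≤ (m : ℤ) - F.codim S + p S + 1

/-- A pre-simplex is a filtered simplex when its blocks are monotone and detect the
filtration: `σ⁻¹(X_i) = Δ_0 ∗ ⋯ ∗ Δ_i`. -/
def PreSimplex.IsFiltered (F : FilteredSpace X) {m : ℕ} (σ : PreSimplex X m) : Prop :=
  Monotone σ.block ∧
    ∀ i : ℤ, σ.map ⁻¹' (F.filt i) =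
      {t : TSimp m | ∀ j, (t : Fin (m+1) → ℝ) j ≠ 0 → σ.block j ≤ i}

/-- `p`-admissibility of a pre-simplex. -/
def PreSimplex.Admissible (F : FilteredSpace X) (p : Set X → ℤ) {m : ℕ}
    (σ : PreSimplex X m) : Prop :=
  MapAdmissible F p σ.map

/-- The allowable simplices of the `p`-intersection complex with support in the
region `W` : filtered, `p`-admissible, with image contained in `W`. -/
def Allowable (F : FilteredSpace X) (p : Set X → ℤ) (W : Set X) {m : ℕ}
    (σ : PreSimplex X m) : Prop :=
  σ.IsFiltered F ∧ σ.Admissible F p ∧ Set.range σ.map ⊆ W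

/-- The complex `C_*^{p̄}` of `p`-intersection chains (of filtered simplices),
with support in the region `W` : chains `ξ` such that every simplex of `ξ` and of
`∂ξ` is `p`-admissible (and carried by `W`). -/
def iChains (F : FilteredSpace X) (p : Set X → ℤ) (G : Type w) [AddCommGroup G]
    (W : Set X) (m : ℕ) : AddSubgroup ((filtSys X).Chains G m) :=
  (filtSys X).suppIn G (fun σ : PreSimplex X m => Allowable F p W σ) ⊓
    ((filtSys X).suppIn G (fun σ : PreSimplex X (m-1) => Allowable F p W σ)).comap
      ((filtSys X).bdryFrom G m)

/-- Intersection homology `H_*^{p̄}` of the part of `X` carried by the region `W`,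
relative to the region `W'` (absolute case: `W = univ`, `W' = ∅`). -/
abbrev iH (F : FilteredSpace X) (p : Set X → ℤ) (G : Type w) [AddCommGroup G]
    (W W' : Set X) (m : ℕ) : Type _ :=
  relHomology ((filtSys X).bdryFrom G) (fun k => iChains F p G W k)
    (fun k => iChains F p G W' k) m

/-- MacPherson's complex `I^{p̄}C_*` of singular intersection chains: all singular
simplices, `p̄`-admissibility as above. -/
def mChains (F : FilteredSpace X) (p : Set X → ℤ) (G : Type w) [AddCommGroup G]
    (m : ℕ) : AddSubgroup ((singSys X).Chains G m) :=
  (singSys X).suppIn G (fun τ : C(TSimp m, X) => MapAdmissible F p τ) ⊓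
    ((singSys X).suppIn G (fun τ : C(TSimp (m-1), X) => MapAdmissible F p τ)).comap
      ((singSys X).bdryFrom G m)

/-- The subcomplex of singular chains carried by `W`. -/
def sChains (X : Type u) [TopologicalSpace X] (G : Type w) [AddCommGroup G]
    (W : Set X) (m : ℕ) : AddSubgroup ((singSys X).Chains G m) :=
  (singSys X).suppIn G (fun τ : C(TSimp m, X) => Set.range τ ⊆ W)

/-- Singular homology of the pair of regions `(W, W')` of `X`. -/
abbrev sH (X : Type u) [TopologicalSpace X] (G : Type w) [AddCommGroup G]
    (W W' : Set X) (m : ℕ) : Type _ :=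
  relHomology ((singSys X).bdryFrom G) (fun k => sChains X G W k)
    (fun k => sChains X G W' k) m

/-! ## Pushforwards -/

/-- The canonical block assignment of a singular simplex of a filtered space:
the vertex `j` is assigned the lowest filtration level containing its image. -/
def canonicalBlock (F : FilteredSpace Y) {m : ℕ} (τ : C(TSimp m, Y)) : Fin (m+1) → ℤ :=
  fun j => sInf {i : ℤ | τ (vert m j) ∈ F.filt i}

/-- Pushforward of a pre-simplex along a continuous map, with the canonical blocks
of the target filtration. -/
def pushSimp (F' : FilteredSpace Y) (g : C(X, Y)) {m : ℕ} (σ : PreSimplex X m) :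
    PreSimplex Y m :=
  ⟨g.comp σ.map, canonicalBlock F' (g.comp σ.map)⟩

/-- Pushforward of chains along a continuous map (`σ ↦ f ∘ σ`). -/
def pushChain (F' : FilteredSpace Y) (g : C(X, Y)) (G : Type w) [AddCommGroup G]
    (m : ℕ) : (filtSys X).Chains G m →+ (filtSys Y).Chains G m :=
  Finsupp.mapDomain.addMonoidHom (pushSimp F' g)

/-- Forget the blocks: from filtered chains to singular chains. -/
def forgetChain (X : Type u) [TopologicalSpace X] (G : Type w) [AddCommGroup G]
    (m : ℕ) : (filtSys X).Chains G m →+ (singSys X).Chains G m :=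
  Finsupp.mapDomain.addMonoidHom (fun σ : PreSimplex X m => σ.map)

/-- Equip singular chains with canonical blocks. -/
def withBlocks (F : FilteredSpace X) (G : Type w) [AddCommGroup G] (m : ℕ) :
    (singSys X).Chains G m →+ (filtSys X).Chains G m :=
  Finsupp.mapDomain.addMonoidHom
    (fun τ : C(TSimp m, X) => (⟨τ, canonicalBlock F τ⟩ : PreSimplex X m))

/-! ## Tame (modered) intersection chains -/

/-- A pre-simplex is regular when its last join factor `Δ_n` is nonempty,
i.e. some vertex has block equal to the formal dimension of the space. -/
def PreSimplex.RegularS (F : FilteredSpace X) {m : ℕ} (σ : PreSimplex X m) : Prop :=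
  ∃ j, σ.block j = (F.dim : ℤ)

/-- The subgroup of chains carried by the singular set (all simplices singular). -/
def tSub (F : FilteredSpace X) (G : Type w) [AddCommGroup G] (m : ℕ) :
    AddSubgroup ((filtSys X).Chains G m) :=
  (filtSys X).suppIn G (fun σ : PreSimplex X m => ¬ σ.RegularS F)

/-- The quotient complex `𝔠_* = C_*(X)/C_*(Σ)`. -/
abbrev tChains (F : FilteredSpace X) (G : Type w) [AddCommGroup G] (m : ℕ) : Type _ :=
  (filtSys X).Chains G m ⧸ tSub F G m

/-- The projection onto the tame quotient. -/
def tProj (F : FilteredSpace X) (G : Type w) [AddCommGroup G] (m : ℕ) :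
    (filtSys X).Chains G m →+ tChains F G m :=
  QuotientAddGroup.mk' (tSub F G m)

open Classical in
/-- The regular part `∂_reg` of the boundary: only regular faces are kept. -/
def bdryReg (F : FilteredSpace X) (G : Type w) [AddCommGroup G] (m : ℕ) :
    (filtSys X).Chains G (m+1) →+ (filtSys X).Chains G m :=
  Finsupp.liftAddHom fun σ =>
    ∑ j : Fin (m+2), (-1 : ℤ) ^ (j : ℕ) •
      (if (σ.face j).RegularS F then Finsupp.singleAddHom (σ.face j) else 0)

/-- `∂_reg`, vanishing in degree 0. -/
def bdryRegFrom (F : FilteredSpace X) (G : Type w) [AddCommGroup G] :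
    ∀ m : ℕ, (filtSys X).Chains G m →+ (filtSys X).Chains G (m-1)
  | 0 => 0
  | (m+1) => bdryReg F G m

lemma bdryRegFrom_eq_zero (F : FilteredSpace X) (G : Type w) [AddCommGroup G] (m : ℕ)
    (ξ : (filtSys X).Chains G m) (hξ : ξ ∈ tSub F G m) :
    bdryRegFrom F G m ξ = 0 := by
  classical
  cases m with
  | zero => rfl
  | succ m =>
    show bdryReg F G m ξ = 0
    rw [bdryReg, Finsupp.liftAddHom_apply, Finsupp.sum]
    apply Finset.sum_eq_zero
    intro σ hσ
    have hns : ¬ σ.RegularS F := hξ σ hσ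
    have hface : ∀ j : Fin (m+2), ¬ (σ.face j).RegularS F := by
      intro j hj
      obtain ⟨k, hk⟩ := hj
      exact hns ⟨j.succAbove k, hk⟩
    have hzero : (∑ j : Fin (m+2), (-1 : ℤ) ^ (j : ℕ) •
        (if (σ.face j).RegularS F then Finsupp.singleAddHom (σ.face j) else 0) :
        G →+ (filtSys X).Chains G m) = 0 := by
      apply Finset.sum_eq_zero
      intro j _
      rw [if_neg (hface j), smul_zero]
    rw [hzero]
    rfl

/-- The differential `𝔡` induced by `∂_reg` on the tame quotient. -/
def tBdryFrom (F : FilteredSpace X) (G : Type w) [AddCommGroup G] (m : ℕ) :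
    tChains F G m →+ tChains F G (m-1) :=
  QuotientAddGroup.map _ _ (bdryRegFrom F G m)
    (by
      intro ξ hξ
      rw [AddSubgroup.mem_comap, bdryRegFrom_eq_zero F G m ξ hξ]
      exact zero_mem _)

/-- The classes of `p`-admissible chains in the tame quotient. -/
def tAdm (F : FilteredSpace X) (p : Set X → ℤ) (G : Type w) [AddCommGroup G] (m : ℕ) :
    AddSubgroup (tChains F G m) :=
  ((filtSys X).suppIn G
      (fun σ : PreSimplex X m => σ.IsFiltered F ∧ σ.Admissible F p)).map (tProj F G m)

/-- The tame `p`-intersection complex `𝔠_*^{p̄}` : classes of admissible chains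
whose `𝔡`-boundary is again (the class of) an admissible chain. -/
def tIC (F : FilteredSpace X) (p : Set X → ℤ) (G : Type w) [AddCommGroup G] (m : ℕ) :
    AddSubgroup (tChains F G m) :=
  tAdm F p G m ⊓ (tAdm F p G (m-1)).comap (tBdryFrom F G m)

/-- Tame intersection homology `𝔥_*^{p̄}(X; G)`. -/
abbrev tH (F : FilteredSpace X) (p : Set X → ℤ) (G : Type w) [AddCommGroup G] (m : ℕ) :
    Type _ :=
  relHomology (tBdryFrom F G) (fun k => tIC F p G k) (fun _ => ⊥) m

/-! ## Products with a factor -/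

/-- The product filtration on `M × X` : `(M × X)_i = M × X_i`. -/
def FilteredSpace.prodLeft (M : Type v) [TopologicalSpace M] [Nonempty M]
    (F : FilteredSpace X) : FilteredSpace (M × X) where
  dim := F.dim
  filt i := univ ×ˢ F.filt i
  filt_neg i h := by (try dsimp only); rw [F.filt_neg i h, Set.prod_empty]
  filt_mono := fun i j h => Set.prod_mono (le_refl _) (F.filt_mono h)
  filt_closed i := isClosed_univ.prod (F.filt_closed i)
  filt_top i h := by (try dsimp only); rw [F.filt_top i h, Set.univ_prod_univ]
  reg_nonempty := by
    obtain ⟨x, hx1, hx2⟩ := F.reg_nonempty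
    exact ⟨(Classical.arbitrary M, x), ⟨trivial, hx1⟩, fun h => hx2 h.2⟩

/-- The product filtration on `X × M` : `(X × M)_i = X_i × M`. -/
def FilteredSpace.prodRight (M : Type v) [TopologicalSpace M] [Nonempty M]
    (F : FilteredSpace X) : FilteredSpace (X × M) where
  dim := F.dim
  filt i := F.filt i ×ˢ univ
  filt_neg i h := by (try dsimp only); rw [F.filt_neg i h, Set.empty_prod]
  filt_mono := fun i j h => Set.prod_mono (F.filt_mono h) (le_refl _)
  filt_closed i := (F.filt_closed i).prod isClosed_univ
  filt_top i h := by (try dsimp only); rw [F.filt_top i h, Set.univ_prod_univ]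
  reg_nonempty := by
    obtain ⟨x, hx1, hx2⟩ := F.reg_nonempty
    exact ⟨(x, Classical.arbitrary M), ⟨hx1, trivial⟩, fun h => hx2 h.1⟩

/-- The perversity induced on `M × X` by a perversity on `X`
(a stratum `M × S` is sent to the value on `S`). -/
def pervProdLeft (p : Set X → ℤ) : Set (M' × X) → ℤ := fun T => p (Prod.snd '' T)

/-- The perversity induced on `X × M` by a perversity on `X`. -/
def pervProdRight (p : Set X → ℤ) : Set (X × M') → ℤ := fun T => p (Prod.fst '' T)

/-! ## The open cone -/

/-- The relation collapsing `L × {0}` in `L × [0,1)`. -/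
def coneSetoid (L : Type u) [TopologicalSpace L] :
    Setoid (L × {t : ℝ // 0 ≤ t ∧ t < 1}) where
  r a b := a = b ∨ (a.2.1 = 0 ∧ b.2.1 = 0)
  iseqv := by
    refine ⟨fun a => Or.inl rfl, ?_, ?_⟩
    · rintro a b (rfl | h)
      exacts [Or.inl rfl, Or.inr ⟨h.2, h.1⟩]
    · rintro a b c (rfl | h) (rfl | h')
      exacts [Or.inl rfl, Or.inr h', Or.inr h, Or.inr ⟨h.1, h'.2⟩]

/-- The open cone `c̊L = L × [0,1) / (L × {0})`. -/
abbrev OpenCone (L : Type u) [TopologicalSpace L] : Type u := Quotient (coneSetoid L)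

/-- The point `[x, t]` of the open cone. -/
def conePt {L : Type u} [TopologicalSpace L] (x : L) (t : {t : ℝ // 0 ≤ t ∧ t < 1}) :
    OpenCone L :=
  Quotient.mk (coneSetoid L) (x, t)

/-- The parameter `0` of the cone. -/
def czero : {t : ℝ // 0 ≤ t ∧ t < 1} := ⟨0, le_refl 0, zero_lt_one⟩

/-- The vertex `𝓌` of the open cone on a (nonempty) filtered space. -/
def coneVertexOf {L : Type u} [TopologicalSpace L] (FL : FilteredSpace L) : OpenCone L :=
  conePt FL.reg_nonempty.choose czero

/-- The cone `c̊A ⊆ c̊L` on a subset `A ⊆ L` (it contains the vertex; `c̊∅ = {𝓌}`). -/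
def coneSet {L : Type u} [TopologicalSpace L] (A : Set L) : Set (OpenCone L) :=
  {z | ∃ x t, z = conePt x t ∧ (t.1 = 0 ∨ x ∈ A)}

lemma coneSet_mono {L : Type u} [TopologicalSpace L] {A B : Set L} (h : A ⊆ B) :
    coneSet A ⊆ coneSet B := by
  rintro z ⟨x, t, rfl, h0 | hA⟩
  exacts [⟨x, t, rfl, Or.inl h0⟩, ⟨x, t, rfl, Or.inr (h hA)⟩]

lemma preimage_coneSet {L : Type u} [TopologicalSpace L] (A : Set L) :
    (Quotient.mk (coneSetoid L)) ⁻¹' (coneSet A) =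
      {a : L × {t : ℝ // 0 ≤ t ∧ t < 1} | a.2.1 = 0 ∨ a.1 ∈ A} := by
  ext ⟨x, t⟩
  constructor
  · rintro ⟨x', t', he, ht'⟩
    have hrel := Quotient.exact he
    rcases hrel with h | h
    · cases h
      exact ht'
    · exact Or.inl h.1
  · intro h
    exact ⟨x, t, rfl, h⟩

/-- The conical filtration on the open cone : `(c̊L)_i = c̊(L_{i-1})`. -/
def coneFiltered {L : Type u} [TopologicalSpace L] (FL : FilteredSpace L) :
    FilteredSpace (OpenCone L) where
  dim := FL.dim + 1
  filt i := if i < 0 then ∅ else coneSet (FL.filt (i-1))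
  filt_neg i h := by (try dsimp only); rw [if_pos h]
  filt_mono := by
    intro i j hij
    dsimp only
    by_cases hi : i < 0
    · rw [if_pos hi]; exact empty_subset _
    · rw [if_neg hi, if_neg (by omega)]
      exact coneSet_mono (FL.filt_mono (by omega))
  filt_closed i := by
    try dsimp only
    by_cases hi : i < 0
    · rw [if_pos hi]; exact isClosed_empty
    · rw [if_neg hi]
      rw [← isQuotientMap_quotient_mk'.isClosed_preimage]
      show IsClosed ((Quotient.mk (coneSetoid L)) ⁻¹' (coneSet (FL.filt (i-1))))
      rw [preimage_coneSet]
      have he : {a : L × {t : ℝ // 0 ≤ t ∧ t < 1} | a.2.1 = 0 ∨ a.1 ∈ FL.filt (i-1)} =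
          (univ ×ˢ {t : {t : ℝ // 0 ≤ t ∧ t < 1} | t.1 = 0}) ∪ (FL.filt (i-1) ×ˢ univ) := by
        ext ⟨x, t⟩
        simp only [Set.mem_setOf_eq, Set.mem_union, Set.mem_prod, Set.mem_univ, true_and,
          and_true]
      rw [he]
      refine IsClosed.union (isClosed_univ.prod ?_) ((FL.filt_closed _).prod isClosed_univ)
      have he2 : {t : {t : ℝ // 0 ≤ t ∧ t < 1} | t.1 = 0} =
          (Subtype.val : {t : ℝ // 0 ≤ t ∧ t < 1} → ℝ) ⁻¹' {0} := by rfl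
      rw [he2]
      exact isClosed_singleton.preimage continuous_subtype_val
  filt_top i h := by
    try dsimp only
    have h' : (0 : ℤ) ≤ i := by
      refine le_trans ?_ h
      positivity
    rw [if_neg (by omega)]
    rw [FL.filt_top (i-1) (by push_cast at h ⊢; omega)]
    apply Set.eq_univ_of_forall
    intro z
    obtain ⟨⟨x, t⟩, rfl⟩ := Quotient.exists_rep z
    exact ⟨x, t, rfl, Or.inr trivial⟩
  reg_nonempty := by
    try dsimp only
    obtain ⟨x, hx1, hx2⟩ := FL.reg_nonempty
    have hd1 : ((FL.dim + 1 : ℕ) : ℤ) - 1 = (FL.dim : ℤ) := by push_cast; ring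
    refine ⟨conePt x ⟨1/2, by norm_num, by norm_num⟩, ?_, ?_⟩
    · rw [if_neg (by push_cast; omega)]
      refine ⟨x, _, rfl, Or.inr ?_⟩
      rw [hd1]
      exact hx1
    · rw [if_neg (by push_cast; omega)]
      rintro ⟨x', t', he, hp⟩
      have hrel := Quotient.exact he
      rcases hrel with hq | hq
      · rcases hp with h0 | hA
        · rw [← congrArg (fun a => (Prod.snd a).1) hq] at h0
          norm_num at h0
        · apply hx2
          have hx' : x' = x := (congrArg Prod.fst hq).symm
          rw [hx'] at hA
          have hd2 : ((FL.dim + 1 : ℕ) : ℤ) - 1 - 1 = (FL.dim : ℤ) - 1 := by push_cast; ring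
          rw [hd2] at hA
          exact hA
      · norm_num at hq

/-- The perversity induced on `L` by a perversity on the cone `c̊L` :
`p̄(S) = p̄(S × ]0,1[)`. -/
def pervConeSlice {L : Type u} [TopologicalSpace L] (p : Set (OpenCone L) → ℤ) :
    Set L → ℤ :=
  fun S => p {z | ∃ x t, z = conePt x t ∧ x ∈ S ∧ t.1 ≠ 0}

/-! ## The intrinsic filtration -/

/-- Two points of a space are equivalent when some pointed neighbourhoods are
homeomorphic. -/
def PtEquiv (X : Type u) [TopologicalSpace X] (x y : X) : Prop :=
  ∃ (U V : Set X) (hU : IsOpen U) (hV : IsOpen V) (hx : x ∈ U) (hy : y ∈ V)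
    (h : U ≃ₜ V), h ⟨x, hx⟩ = ⟨y, hy⟩

lemma PtEquiv.refl (X : Type u) [TopologicalSpace X] (x : X) : PtEquiv X x x :=
  ⟨univ, univ, isOpen_univ, isOpen_univ, trivial, trivial, Homeomorph.refl _, rfl⟩

/-- The filtration of the intrinsic CS-set `X^*`: `X^*_i` is the union of the
equivalence classes contained in `X_i` (equivalently, formed of strata of
dimension at most `i`). -/
def intrinsicFilt {X : Type u} [TopologicalSpace X] (F : FilteredSpace X) (i : ℤ) :
    Set X :=
  {x | ∀ y, PtEquiv X x y → y ∈ F.filt i}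

/-- The intrinsic filtered space `X^*` associated with a filtered space. -/
def intrinsic {X : Type u} [TopologicalSpace X] (F : FilteredSpace X) :
    FilteredSpace X where
  dim := F.dim
  filt := intrinsicFilt F
  filt_neg i h := by
    rw [Set.eq_empty_iff_forall_notMem]
    intro x hx
    have := hx x (PtEquiv.refl X x)
    rw [F.filt_neg i h] at this
    exact this
  filt_mono := fun i j hij x hx y hy => F.filt_mono hij (hx y hy)
  filt_closed i := by
    rw [← isOpen_compl_iff, isOpen_iff_forall_mem_open]
    intro x hx
    rw [Set.mem_compl_iff, intrinsicFilt, Set.mem_setOf_eq, not_forall] at hx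
    obtain ⟨y, hy⟩ := hx
    rw [_root_.not_imp] at hy
    obtain ⟨⟨U, V, hU, hV, hxU, hyV, h, hhx⟩, hyF⟩ := hy
    refine ⟨Subtype.val '' (⇑h ⁻¹' (Subtype.val ⁻¹' (F.filt i)ᶜ)), ?_, ?_, ?_⟩
    · rintro _ ⟨u, hu, rfl⟩
      intro hcon
      exact hu (hcon (h u).1 ⟨U, V, hU, hV, u.2, (h u).2, h, rfl⟩)
    · exact hU.isOpenMap_subtype_val _
        ((h.continuous.isOpen_preimage _) (continuous_subtype_val.isOpen_preimage _
          (F.filt_closed i).isOpen_compl))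
    · refine ⟨⟨x, hxU⟩, ?_, rfl⟩
      show (h ⟨x, hxU⟩ : X) ∉ F.filt i
      rw [hhx]
      exact hyF
  filt_top i h := by
    apply Set.eq_univ_of_forall
    intro x y hy
    rw [F.filt_top i h]
    trivial
  reg_nonempty := by
    obtain ⟨x, hx1, hx2⟩ := F.reg_nonempty
    refine ⟨x, ?_, ?_⟩
    · intro y hy
      rw [F.filt_top _ (le_refl _)]
      trivial
    · intro hcon
      exact hx2 (hcon x (PtEquiv.refl X x))

/-- A stratum `S` of `X` is a source of a stratum `T` of `X^*` when `ν(S) ⊆ T`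
and `dim S = dim T`. -/
def IsSource {X : Type u} [TopologicalSpace X] (F : FilteredSpace X) (S T : Set X) :
    Prop :=
  F.IsStratum S ∧ (intrinsic F).IsStratum T ∧ S ⊆ T ∧
    F.stratumDim S = (intrinsic F).stratumDim T

/-- Equivalence of strata: some point of one is equivalent to some point of the
other. -/
def StrataEquiv (X : Type u) [TopologicalSpace X] (S S' : Set X) : Prop :=
  ∃ x ∈ S, ∃ y ∈ S', PtEquiv X x y

/-- `K`-perversity. -/
def IsKPerversity {X : Type u} [TopologicalSpace X] (F : FilteredSpace X)
    (p : Set X → ℤ) : Prop :=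
  F.IsPerversity p ∧
  (∀ S S' T, IsSource F S T → IsSource F S' T → p S = p S') ∧
  (∀ S R, F.IsStratum S → F.IsRegularStratum R → StrataEquiv X S R → 0 ≤ p S) ∧
  (∀ S S' T, F.IsStratum S → IsSource F S' T → F.IsSingularStratum S' →
    S ⊆ closure S' → StrataEquiv X S S' →
      p S ≤ p S' ∧ F.dualPerv p S' ≤ F.dualPerv p S)

open Classical in
/-- The perversity `ν_* p̄` induced on `X^*` by a perversity on `X` :
its value on a stratum `T` of `X^*` is the value of `p̄` on any source of `T`. -/
def pushPerv {X : Type u} [TopologicalSpace X] (F : FilteredSpace X) (p : Set X → ℤ) :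
    Set X → ℤ :=
  fun T => if h : ∃ S, IsSource F S T then p h.choose else 0

open Classical in
/-- The pullback perversity `f^* q̄` of a perversity along a stratified map:
`(f^* q̄)(S) = q̄(S^f)`. -/
def pullPerv {X : Type u} {Y : Type v} [TopologicalSpace X] [TopologicalSpace Y]
    (F : FilteredSpace X) (F' : FilteredSpace Y) (f : X → Y) (q : Set Y → ℤ) :
    Set X → ℤ :=
  fun S => if h : ∃ T, F'.IsStratum T ∧ f '' S ⊆ T then q h.choose else 0

/-- The intrinsic aggregation `ν : X → X^*` (the identity map), as a pushforward of
filtered chains: blocks are recomputed with respect to the intrinsic filtration. -/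
def nuChain {X : Type u} [TopologicalSpace X] (F : FilteredSpace X) (G : Type w)
    [AddCommGroup G] (m : ℕ) :
    (filtSys X).Chains G m →+ (filtSys X).Chains G m :=
  pushChain (intrinsic F) (ContinuousMap.id X) G m

/-! ## CS sets -/

/-- A CS-set: each `X_i ∖ X_{i-1}` is a topological `i`-manifold (possibly empty)
and points of `X_i ∖ X_{i-1}`, `i ≠ n`, have conical charts `U × c̊L ≅ V` with `L`
a compact (Hausdorff) filtered space of formal dimension `n - i - 1`. -/
def IsCSSet {X : Type u} [TopologicalSpace X] (F : FilteredSpace X) : Prop :=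
  (∀ i : ℕ, ∀ x, ∀ hx : x ∈ F.filt i \ F.filt ((i : ℤ) - 1),
      ∃ V : Set ↥(F.filt i \ F.filt ((i : ℤ) - 1)), IsOpen V ∧ ⟨x, hx⟩ ∈ V ∧
        Nonempty (↥V ≃ₜ (Fin i → ℝ))) ∧
  (∀ i : ℕ, i < F.dim → ∀ x ∈ F.filt i \ F.filt ((i : ℤ) - 1),
    ∃ V : Set X, IsOpen V ∧ x ∈ V ∧
    ∃ U : Set X, x ∈ U ∧ U ⊆ F.filt i \ F.filt ((i : ℤ) - 1) ∧
      IsOpen (Subtype.val ⁻¹' U : Set ↥(F.filt i \ F.filt ((i : ℤ) - 1))) ∧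
    ∃ (L : Type u) (_ : TopologicalSpace L) (_ : T2Space L) (_ : CompactSpace L)
      (FL : FilteredSpace L), (FL.dim : ℤ) = (F.dim : ℤ) - i - 1 ∧
    ∃ φ : (↥U × OpenCone L) ≃ₜ ↥V,
      (∀ u : ↥U, ((φ (u, coneVertexOf FL) : ↥V) : X) = (u : X)) ∧
      (∀ j : ℤ, 0 ≤ j → j ≤ (F.dim : ℤ) - i - 1 →
        Subtype.val '' (⇑φ '' (univ ×ˢ coneSet (FL.filt j))) = V ∩ F.filt (i + j + 1)))

/-- A normal CS-set: one admitting conical charts with connected links. -/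
def IsNormalCSSet {X : Type u} [TopologicalSpace X] (F : FilteredSpace X) : Prop :=
  (∀ i : ℕ, ∀ x, ∀ hx : x ∈ F.filt i \ F.filt ((i : ℤ) - 1),
      ∃ V : Set ↥(F.filt i \ F.filt ((i : ℤ) - 1)), IsOpen V ∧ ⟨x, hx⟩ ∈ V ∧
        Nonempty (↥V ≃ₜ (Fin i → ℝ))) ∧
  (∀ i : ℕ, i < F.dim → ∀ x ∈ F.filt i \ F.filt ((i : ℤ) - 1),
    ∃ V : Set X, IsOpen V ∧ x ∈ V ∧
    ∃ U : Set X, x ∈ U ∧ U ⊆ F.filt i \ F.filt ((i : ℤ) - 1) ∧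
      IsOpen (Subtype.val ⁻¹' U : Set ↥(F.filt i \ F.filt ((i : ℤ) - 1))) ∧
    ∃ (L : Type u) (_ : TopologicalSpace L) (_ : T2Space L) (_ : CompactSpace L)
      (_ : ConnectedSpace L) (FL : FilteredSpace L),
      (FL.dim : ℤ) = (F.dim : ℤ) - i - 1 ∧
    ∃ φ : (↥U × OpenCone L) ≃ₜ ↥V,
      (∀ u : ↥U, ((φ (u, coneVertexOf FL) : ↥V) : X) = (u : X)) ∧
      (∀ j : ℤ, 0 ≤ j → j ≤ (F.dim : ℤ) - i - 1 →
        Subtype.val '' (⇑φ '' (univ ×ˢ coneSet (FL.filt j))) = V ∩ F.filt (i + j + 1)))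

/-! ## Miscellaneous helpers -/

lemma SimpSystem.suppIn_mono (S : SimpSystem.{u}) (G : Type w) [AddCommGroup G] {m : ℕ}
    {P Q : S.Gen m → Prop} (h : ∀ σ, P σ → Q σ) : S.suppIn G P ≤ S.suppIn G Q :=
  fun ξ hξ σ hσ => h σ (hξ σ hσ)

lemma iChains_mono (F : FilteredSpace X) (p : Set X → ℤ) (G : Type w) [AddCommGroup G]
    {W W' : Set X} (h : W ⊆ W') (m : ℕ) :
    iChains F p G W m ≤ iChains F p G W' m := by
  apply inf_le_inf
  · exact (filtSys X).suppIn_mono G (fun σ hσ => ⟨hσ.1, hσ.2.1, hσ.2.2.trans h⟩)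
  · exact AddSubgroup.comap_mono
      ((filtSys X).suppIn_mono G (fun σ hσ => ⟨hσ.1, hσ.2.1, hσ.2.2.trans h⟩))

/-- The inclusion `x ↦ [x, t]` of `L` into the open cone. -/
def coneIncl {L : Type u} [TopologicalSpace L] (t : ℝ) (h0 : 0 ≤ t) (h1 : t < 1) :
    C(L, OpenCone L) where
  toFun x := conePt x ⟨t, h0, h1⟩
  continuous_toFun := by
    apply Continuous.comp
    · exact continuous_quotient_mk'
    · exact continuous_id.prodMk continuous_const

/-- The unit sphere `S^ℓ ⊆ ℝ^{ℓ+1}`. -/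
abbrev Sph (l : ℕ) : Set (EuclideanSpace ℝ (Fin (l+1))) := Metric.sphere 0 1

instance (l : ℕ) : Nonempty (Sph l) :=
  (NormedSpace.sphere_nonempty.mpr zero_le_one).to_subtype

/-- `p̄`-homogeneity: every singular stratum equivalent to a regular stratum has
`p̄(S) ≤ t̄(S)`. -/
def PHomogeneous {X : Type u} [TopologicalSpace X] (F : FilteredSpace X)
    (p : Set X → ℤ) : Prop :=
  ∀ S R, F.IsSingularStratum S → F.IsRegularStratum R → StrataEquiv X S R →
    p S ≤ F.codim S - 2

/-! ## Stratified spaces, more perversities, absolute homology -/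

/-- A stratified space: a filtered space in which the frontier condition holds for
strata: `S ∩ cl S' ≠ ∅` implies `S ⊆ cl S'`. -/
def FilteredSpace.IsStratifiedSpace {X : Type u} [TopologicalSpace X]
    (F : FilteredSpace X) : Prop :=
  ∀ S S', F.IsStratum S → F.IsStratum S' → (S ∩ closure S').Nonempty → S ⊆ closure S'

open Classical in
/-- The maximal (top) perversity `t̄` : `t̄(S) = codim S - 2` on singular strata. -/
def tPerv {X : Type u} [TopologicalSpace X] (F : FilteredSpace X) : Set X → ℤ :=
  fun S => if F.IsRegularStratum S then 0 else F.codim S - 2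

/-- Absolute `p̄`-intersection homology of the region `W` of `X`. -/
abbrev iHa {X : Type u} [TopologicalSpace X] (F : FilteredSpace X) (p : Set X → ℤ)
    (G : Type w) [AddCommGroup G] (W : Set X) (m : ℕ) : Type _ :=
  relHomology ((filtSys X).bdryFrom G) (fun k => iChains F p G W k) (fun _ => ⊥) m

/-- Absolute singular homology of the region `W` of `X`. -/
abbrev sHa (X : Type u) [TopologicalSpace X] (G : Type w) [AddCommGroup G]
    (W : Set X) (m : ℕ) : Type _ :=
  relHomology ((singSys X).bdryFrom G) (fun k => sChains X G W k) (fun _ => ⊥) m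

/-- MacPherson's singular intersection homology `I^{p̄}H_*`. -/
abbrev mH {X : Type u} [TopologicalSpace X] (F : FilteredSpace X) (p : Set X → ℤ)
    (G : Type w) [AddCommGroup G] (m : ℕ) : Type _ :=
  relHomology ((singSys X).bdryFrom G) (fun k => mChains F p G k) (fun _ => ⊥) m

/-! ## Fatal faces and the defect -/

/-- The vertex set of the smallest face `F_S` of `Δ` containing `σ⁻¹(S)`. -/
def vtx {X : Type u} [TopologicalSpace X] {m : ℕ} (σ : PreSimplex X m) (S : Set X) :
    Set (Fin (m+1)) :=
  {j | ∃ t : TSimp m, σ.map t ∈ S ∧ (t : Fin (m+1) → ℝ) j ≠ 0}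

/-- The candidates for the fatal face: proper faces `F_S` with
`dim F_S = dim Δ - codim S + p̄(S)`. -/
def fatalCands {X : Type u} [TopologicalSpace X] (F : FilteredSpace X) (p : Set X → ℤ)
    {m : ℕ} (σ : PreSimplex X m) : Set (Set (Fin (m+1))) :=
  {A | ∃ S, F.IsStratum S ∧ A = vtx σ S ∧ A ≠ univ ∧
    ((A.ncard : ℤ) = (m : ℤ) - F.codim S + p S + 1)}

/-- `A` is (the vertex set of) the `p̄`-fatal face of `σ`: the least candidate. -/
def IsFatalIdx {X : Type u} [TopologicalSpace X] (F : FilteredSpace X) (p : Set X → ℤ)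
    {m : ℕ} (σ : PreSimplex X m) (A : Set (Fin (m+1))) : Prop :=
  A ∈ fatalCands F p σ ∧ ∀ B ∈ fatalCands F p σ, A ⊆ B

/-- `S` is the `p̄`-guilty stratum of `σ` : `F_S` is the fatal face of `σ`. -/
def IsGuilty {X : Type u} [TopologicalSpace X] (F : FilteredSpace X) (p : Set X → ℤ)
    {m : ℕ} (σ : PreSimplex X m) (S : Set X) : Prop :=
  F.IsStratum S ∧ IsFatalIdx F p σ (vtx σ S) ∧
    (((vtx σ S).ncard : ℤ) = (m : ℤ) - F.codim S + p S + 1)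

/-- The `p̄`-defect `ℓ_{p̄}(σ)` : the codimension of the guilty stratum, `0` if `σ` is
of `p̄`-intersection. -/
def defect {X : Type u} [TopologicalSpace X] (F : FilteredSpace X) (p : Set X → ℤ)
    {m : ℕ} (σ : PreSimplex X m) : ℤ :=
  sSup ({0} ∪ {c | ∃ S, IsGuilty F p σ S ∧ c = F.codim S})

/-- The linear simplex with vertices `v j` (a linear self-map of the standard
simplex). -/
def linMap {m : ℕ} (v : Fin (m+1) → TSimp m) : C(TSimp m, TSimp m) where
  toFun t := ⟨fun i => ∑ j, (t : Fin (m+1) → ℝ) j * (v j : Fin (m+1) → ℝ) i, by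
    refine ⟨fun i => ?_, ?_⟩
    · exact Finset.sum_nonneg fun j _ => mul_nonneg (t.2.1 j) ((v j).2.1 i)
    · rw [Finset.sum_comm]
      have he : ∀ j : Fin (m+1),
          (∑ i, (t : Fin (m+1) → ℝ) j * (v j : Fin (m+1) → ℝ) i) = (t : Fin (m+1) → ℝ) j := by
        intro j
        rw [← Finset.mul_sum, show (∑ i, (v j : Fin (m+1) → ℝ) i) = 1 from (v j).2.2, mul_one]
      rw [Finset.sum_congr rfl (fun j _ => he j)]
      exact t.2.2⟩
  continuous_toFun := by
    apply Continuous.subtype_mk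
    apply continuous_pi
    intro i
    apply continuous_finset_sum
    intro j _
    exact ((continuous_apply j).comp continuous_subtype_val).mul continuous_const

/-! ## Auxiliary lemmas for Statement 2 -/

section AuxStratified

variable {X : Type u} {Y : Type v} [TopologicalSpace X] [TopologicalSpace Y]

/-- The filtration level of a point. -/
def flev (F : FilteredSpace X) (y : X) : ℤ := sInf {i | y ∈ F.filt i}

lemma flev_set_nonempty (F : FilteredSpace X) (y : X) : {i : ℤ | y ∈ F.filt i}.Nonempty :=
  ⟨F.dim, by rw [Set.mem_setOf_eq, F.filt_top _ le_rfl]; trivial⟩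

lemma flev_set_bddBelow (F : FilteredSpace X) (y : X) : BddBelow {i : ℤ | y ∈ F.filt i} :=
  ⟨0, fun i hi => le_of_not_gt fun h => by
    rw [Set.mem_setOf_eq, F.filt_neg i h] at hi; exact hi⟩

lemma mem_filt_flev (F : FilteredSpace X) (y : X) : y ∈ F.filt (flev F y) :=
  Int.csInf_mem (flev_set_nonempty F y) (flev_set_bddBelow F y)

lemma flev_le_of_mem {F : FilteredSpace X} {y : X} {i : ℤ} (h : y ∈ F.filt i) :
    flev F y ≤ i :=
  csInf_le (flev_set_bddBelow F y) h

lemma mem_filt_iff_flev_le {F : FilteredSpace X} {y : X} {i : ℤ} :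
    y ∈ F.filt i ↔ flev F y ≤ i :=
  ⟨flev_le_of_mem, fun h => F.filt_mono h (mem_filt_flev F y)⟩

lemma not_mem_filt_flev_sub_one (F : FilteredSpace X) (y : X) :
    y ∉ F.filt (flev F y - 1) := fun h => by
  have := flev_le_of_mem h; omega

lemma mem_diff_of_isStratumDim {F : FilteredSpace X} {S : Set X} {i : ℤ}
    (h : F.IsStratumDim S i) : S ⊆ F.filt i \ F.filt (i - 1) := by
  obtain ⟨x, hx, rfl⟩ := h
  exact connectedComponentIn_subset _ _

lemma flev_eq_of_mem_stratum {F : FilteredSpace X} {S : Set X} {i : ℤ} {y : X}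
    (h : F.IsStratumDim S i) (hy : y ∈ S) : flev F y = i := by
  have hd := mem_diff_of_isStratumDim h hy
  have h1 : flev F y ≤ i := flev_le_of_mem hd.1
  have h2 : ¬flev F y ≤ i - 1 := fun hle => hd.2 (F.filt_mono hle (mem_filt_flev F y))
  omega

lemma isStratumDim_unique {F : FilteredSpace X} {S : Set X} {i i' : ℤ}
    (h : F.IsStratumDim S i) (h' : F.IsStratumDim S i') : i = i' := by
  obtain ⟨x, hx, hS⟩ := h
  have hxm : x ∈ S := hS ▸ mem_connectedComponentIn hx
  have h1 := flev_eq_of_mem_stratum ⟨x, hx, hS⟩ hxm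
  have h2 := flev_eq_of_mem_stratum h' hxm
  omega

lemma stratumDim_eq {F : FilteredSpace X} {S : Set X} {i : ℤ} (h : F.IsStratumDim S i) :
    F.stratumDim S = i := by
  have hex : ∃ j, F.IsStratumDim S j := ⟨i, h⟩
  rw [FilteredSpace.stratumDim, dif_pos hex]
  exact isStratumDim_unique hex.choose_spec h

lemma isStratumDim_bounds {F : FilteredSpace X} {S : Set X} {i : ℤ}
    (h : F.IsStratumDim S i) : 0 ≤ i ∧ i ≤ (F.dim : ℤ) := by
  obtain ⟨x, hx, -⟩ := h
  constructor
  · by_contra hc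
    push_neg at hc
    rw [F.filt_neg i hc] at hx
    exact absurd hx.1 (Set.notMem_empty x)
  · by_contra hc
    push_neg at hc
    exact hx.2 (by rw [F.filt_top (i - 1) (by omega)]; trivial)

lemma stratum_eq_of_mem {F : FilteredSpace X} {S S' : Set X} {i i' : ℤ} {y : X}
    (h : F.IsStratumDim S i) (h' : F.IsStratumDim S' i') (hy : y ∈ S) (hy' : y ∈ S') :
    S = S' := by
  have hii : i = i' := by
    rw [← flev_eq_of_mem_stratum h hy, ← flev_eq_of_mem_stratum h' hy']
  subst hii
  obtain ⟨x, hx, rfl⟩ := h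
  obtain ⟨x', hx', rfl⟩ := h'
  rw [connectedComponentIn_eq hy, connectedComponentIn_eq hy']

lemma exists_stratumDim_mem (F : FilteredSpace X) (y : X) :
    ∃ S, F.IsStratumDim S (flev F y) ∧ y ∈ S := by
  have hy : y ∈ F.filt (flev F y) \ F.filt (flev F y - 1) :=
    ⟨mem_filt_flev F y, not_mem_filt_flev_sub_one F y⟩
  exact ⟨_, ⟨y, hy, rfl⟩, mem_connectedComponentIn hy⟩

lemma isRegular_iff_dim {F : FilteredSpace X} {S : Set X} {i : ℤ}
    (h : F.IsStratumDim S i) : F.IsRegularStratum S ↔ i = (F.dim : ℤ) := by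
  constructor
  · intro hr; exact isStratumDim_unique h hr
  · rintro rfl; exact h

lemma vert_apply {m : ℕ} (j i : Fin (m+1)) :
    (vert m j : Fin (m+1) → ℝ) i = if i = j then 1 else 0 := rfl

lemma vert_mem_closure_suppSet {m : ℕ} (t : TSimp m) {j : Fin (m+1)}
    (hj : (t : Fin (m+1) → ℝ) j ≠ 0) :
    vert m j ∈ closure {s : TSimp m |
      ∀ i, (s : Fin (m+1) → ℝ) i ≠ 0 ↔ (t : Fin (m+1) → ℝ) i ≠ 0} := by
  rw [mem_closure_iff_seq_limit]
  have ha : ∀ n : ℕ, (0 : ℝ) < ((n : ℝ) + 2)⁻¹ := fun n => by positivity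
  have ha2 : ∀ n : ℕ, ((n : ℝ) + 2)⁻¹ ≤ 1 / 2 := by
    intro n
    rw [div_eq_inv_mul, mul_one]
    apply inv_anti₀ (by norm_num)
    have : (0 : ℝ) ≤ (n : ℝ) := Nat.cast_nonneg n
    linarith
  refine ⟨fun n => ⟨((n : ℝ) + 2)⁻¹ • (t : Fin (m+1) → ℝ) +
      (1 - ((n : ℝ) + 2)⁻¹) • (vert m j : Fin (m+1) → ℝ),
      convex_stdSimplex ℝ (Fin (m+1)) t.2 (vert m j).2 (ha n).le
        (by have := ha2 n; linarith) (by ring)⟩, ?_, ?_⟩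
  · intro n i
    simp only [Set.mem_setOf_eq] at *
    show ((n : ℝ) + 2)⁻¹ * (t : Fin (m+1) → ℝ) i +
        (1 - ((n : ℝ) + 2)⁻¹) * (vert m j : Fin (m+1) → ℝ) i ≠ 0 ↔ _
    rcases eq_or_ne i j with rfl | hij
    · rw [vert_apply, if_pos rfl, mul_one]
      have h1 : 0 ≤ ((n : ℝ) + 2)⁻¹ * (t : Fin (m+1) → ℝ) i :=
        mul_nonneg (ha n).le (t.2.1 i)
      have h2 : (0 : ℝ) < 1 - ((n : ℝ) + 2)⁻¹ := by have := ha2 n; linarith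
      constructor
      · intro _; exact hj
      · intro _; linarith
    · rw [vert_apply, if_neg hij, mul_zero, add_zero, mul_ne_zero_iff]
      constructor
      · intro h; exact h.2
      · intro h; exact ⟨(ha n).ne', h⟩
  · rw [tendsto_subtype_rng]
    have h0 : Filter.Tendsto (fun n : ℕ => ((n : ℝ) + 2)⁻¹) Filter.atTop (nhds 0) := by
      apply Filter.Tendsto.inv_tendsto_atTop
      exact Filter.tendsto_atTop_add_const_right _ 2 tendsto_natCast_atTop_atTop
    have hc : Continuous (fun a : ℝ => a • (t : Fin (m+1) → ℝ) +
        (1 - a) • (vert m j : Fin (m+1) → ℝ)) := by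
      apply Continuous.add
      · exact continuous_id.smul continuous_const
      · exact (continuous_const.sub continuous_id).smul continuous_const
    have := (hc.tendsto 0).comp h0
    simp only [zero_smul, sub_zero, one_smul, zero_add] at this
    exact this

lemma exists_max_block {m : ℕ} {σ : PreSimplex X m} (hmono : Monotone σ.block)
    (t : TSimp m) :
    ∃ js, (t : Fin (m+1) → ℝ) js ≠ 0 ∧
      ∀ j, (t : Fin (m+1) → ℝ) j ≠ 0 → σ.block j ≤ σ.block js := by
  classical
  have hne : ∃ j, (t : Fin (m+1) → ℝ) j ≠ 0 := by
    by_contra h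
    push_neg at h
    have hsum : ∑ j, (t : Fin (m+1) → ℝ) j = 1 := t.2.2
    rw [Finset.sum_congr rfl (fun j _ => h j)] at hsum
    simp at hsum
  set J : Finset (Fin (m+1)) := Finset.univ.filter (fun j => (t : Fin (m+1) → ℝ) j ≠ 0)
    with hJ
  have hJne : J.Nonempty := by
    obtain ⟨j, hj⟩ := hne
    exact ⟨j, by simp [hJ, hj]⟩
  refine ⟨J.max' hJne, ?_, ?_⟩
  · have := J.max'_mem hJne
    simp only [hJ, Finset.mem_filter, Finset.mem_univ, true_and] at this
    exact this
  · intro j hj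
    exact hmono (J.le_max' j (by simp [hJ, hj]))

lemma key_lev (F : FilteredSpace X) (F' : FilteredSpace Y) (f : C(X, Y))
    (hf : FilteredSpace.IsStratifiedMap F F' ⇑f) {m : ℕ} {σ : PreSimplex X m}
    (hσ : σ.IsFiltered F) (t : TSimp m) (js : Fin (m+1))
    (hjs : (t : Fin (m+1) → ℝ) js ≠ 0)
    (hmax : ∀ j, (t : Fin (m+1) → ℝ) j ≠ 0 → σ.block j ≤ σ.block js) :
    flev F' (f (σ.map t)) = flev F' (f (σ.map (vert m js))) ∧
      ∀ j, (t : Fin (m+1) → ℝ) j ≠ 0 →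
        flev F' (f (σ.map (vert m j))) ≤ flev F' (f (σ.map t)) := by
  classical
  set k := σ.block js with hk
  set A : Set (TSimp m) :=
    {s | ∀ i, (s : Fin (m+1) → ℝ) i ≠ 0 ↔ (t : Fin (m+1) → ℝ) i ≠ 0} with hA
  have htA : t ∈ A := fun i => Iff.rfl
  have hmemD : ∀ s : TSimp m, (∀ i, (s : Fin (m+1) → ℝ) i ≠ 0 → σ.block i ≤ k) →
      (∃ i, (s : Fin (m+1) → ℝ) i ≠ 0 ∧ σ.block i = k) →
      σ.map s ∈ F.filt k \ F.filt (k - 1) := by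
    intro s hle hex
    obtain ⟨i0, hi0, hbi0⟩ := hex
    constructor
    · have hmem : s ∈ σ.map ⁻¹' F.filt k := by rw [hσ.2 k]; exact hle
      exact hmem
    · intro hmem
      have hmem' : s ∈ σ.map ⁻¹' F.filt (k - 1) := hmem
      rw [hσ.2 (k - 1)] at hmem'
      have := hmem' i0 hi0
      omega
  have hAD : ∀ s ∈ A, σ.map s ∈ F.filt k \ F.filt (k - 1) := by
    intro s hs
    exact hmemD s (fun i hi => hmax i ((hs i).1 hi)) ⟨js, (hs js).2 hjs, rfl⟩
  have hvD : σ.map (vert m js) ∈ F.filt k \ F.filt (k - 1) := by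
    refine hmemD _ ?_ ⟨js, ?_, rfl⟩
    · intro i hi
      rw [vert_apply] at hi
      by_cases h : i = js
      · subst h; exact le_rfl
      · rw [if_neg h] at hi; exact absurd rfl hi
    · rw [vert_apply, if_pos rfl]; norm_num
  have hC : Convex ℝ {x : Fin (m+1) → ℝ | x ∈ stdSimplex ℝ (Fin (m+1)) ∧
      ∀ i, x i ≠ 0 ↔ (t : Fin (m+1) → ℝ) i ≠ 0} := by
    intro x hx y hy a b haa hbb hab
    refine ⟨convex_stdSimplex ℝ (Fin (m+1)) hx.1 hy.1 haa hbb hab, fun i => ?_⟩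
    simp only [Pi.add_apply, Pi.smul_apply, smul_eq_mul]
    by_cases h0 : (t : Fin (m+1) → ℝ) i ≠ 0
    · have hxi : 0 < x i := lt_of_le_of_ne (hx.1.1 i) (Ne.symm ((hx.2 i).2 h0))
      have hyi : 0 < y i := lt_of_le_of_ne (hy.1.1 i) (Ne.symm ((hy.2 i).2 h0))
      have hpos : 0 < a * x i + b * y i := by
        rcases eq_or_lt_of_le haa with ha0 | hapos
        · have hb1 : b = 1 := by linarith
          rw [← ha0, hb1]; simpa using hyi
        · have h1 : 0 < a * x i := mul_pos hapos hxi
          have h2 : 0 ≤ b * y i := mul_nonneg hbb hyi.le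
          linarith
      exact ⟨fun _ => h0, fun _ => hpos.ne'⟩
    · push_neg at h0
      have hxi : x i = 0 := by
        by_contra h; exact ((hx.2 i).1 h) h0
      have hyi : y i = 0 := by
        by_contra h; exact ((hy.2 i).1 h) h0
      simp [hxi, hyi, h0]
  have hCA : Subtype.val '' A = {x : Fin (m+1) → ℝ | x ∈ stdSimplex ℝ (Fin (m+1)) ∧
      ∀ i, x i ≠ 0 ↔ (t : Fin (m+1) → ℝ) i ≠ 0} := by
    ext x
    constructor
    · rintro ⟨s, hs, rfl⟩; exact ⟨s.2, hs⟩
    · rintro ⟨hx1, hx2⟩; exact ⟨⟨x, hx1⟩, hx2, rfl⟩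
  have hApc : IsPreconnected A := by
    rw [← Topology.IsInducing.subtypeVal.isPreconnected_image, hCA]
    exact hC.isPreconnected
  have himg : IsPreconnected (σ.map '' A) :=
    hApc.image _ σ.map.continuous.continuousOn
  have hADs : σ.map '' A ⊆ F.filt k \ F.filt (k - 1) := by
    rintro x ⟨s, hs, rfl⟩; exact hAD s hs
  set S : Set X := connectedComponentIn (F.filt k \ F.filt (k - 1)) (σ.map t) with hS
  have hSdim : F.IsStratumDim S k := ⟨σ.map t, hAD t htA, rfl⟩
  have hsub : σ.map '' A ⊆ S := himg.subset_connectedComponentIn ⟨t, htA, rfl⟩ hADs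
  have hvcl : ∀ j, (t : Fin (m+1) → ℝ) j ≠ 0 →
      σ.map (vert m j) ∈ closure (σ.map '' A) := by
    intro j hj
    have h1 := vert_mem_closure_suppSet t hj
    exact image_closure_subset_closure_image σ.map.continuous ⟨vert m j, h1, rfl⟩
  have hjs_mem_S : σ.map (vert m js) ∈ S := by
    have hBpc : IsPreconnected (σ.map '' A ∪ {σ.map (vert m js)}) := by
      apply himg.subset_closure Set.subset_union_left
      rintro x (hx | hx)
      · exact subset_closure hx
      · simp only [Set.mem_singleton_iff] at hx
        subst hx
        exact hvcl js hjs
    have hBsub : σ.map '' A ∪ {σ.map (vert m js)} ⊆ S := by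
      apply hBpc.subset_connectedComponentIn (Or.inl ⟨t, htA, rfl⟩)
      rintro x (hx | hx)
      · exact hADs hx
      · simp only [Set.mem_singleton_iff] at hx
        subst hx
        exact hvD
    exact hBsub (Or.inr rfl)
  obtain ⟨T, hT, hfS, -⟩ := hf.2 S ⟨k, hSdim⟩
  obtain ⟨ℓ, hTdim⟩ := hT
  have hft : f (σ.map t) ∈ T := hfS ⟨σ.map t, hsub ⟨t, htA, rfl⟩, rfl⟩
  have hfjs : f (σ.map (vert m js)) ∈ T := hfS ⟨_, hjs_mem_S, rfl⟩
  have h1 : flev F' (f (σ.map t)) = ℓ := flev_eq_of_mem_stratum hTdim hft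
  have h2 : flev F' (f (σ.map (vert m js))) = ℓ := flev_eq_of_mem_stratum hTdim hfjs
  refine ⟨by rw [h1, h2], ?_⟩
  intro j hj
  rw [h1]
  have hcl : f (σ.map (vert m j)) ∈ closure (⇑f '' (σ.map '' A)) :=
    image_closure_subset_closure_image f.continuous ⟨_, hvcl j hj, rfl⟩
  have hTl : T ⊆ F'.filt ℓ := fun x hx => (mem_diff_of_isStratumDim hTdim hx).1
  have hcls : closure (⇑f '' (σ.map '' A)) ⊆ F'.filt ℓ := by
    apply closure_minimal _ (F'.filt_closed ℓ)
    rintro x ⟨x', hx', rfl⟩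
    exact hTl (hfS ⟨x', hsub hx', rfl⟩)
  exact flev_le_of_mem (hcls hcl)

lemma pushSimp_isFiltered (F : FilteredSpace X) (F' : FilteredSpace Y) (f : C(X, Y))
    (hf : FilteredSpace.IsStratifiedMap F F' ⇑f) {m : ℕ} {σ : PreSimplex X m}
    (hσ : σ.IsFiltered F) : (pushSimp F' f σ).IsFiltered F' := by
  have hblock : ∀ j, (pushSimp F' f σ).block j = flev F' (f (σ.map (vert m j))) :=
    fun j => rfl
  constructor
  · intro j j' hjj'
    rcases eq_or_lt_of_le hjj' with rfl | hlt
    · exact le_rfl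
    have hmem : ((1 : ℝ)/2) • (vert m j : Fin (m+1) → ℝ) +
        ((1 : ℝ)/2) • (vert m j' : Fin (m+1) → ℝ) ∈ stdSimplex ℝ (Fin (m+1)) :=
      convex_stdSimplex ℝ (Fin (m+1)) (vert m j).2 (vert m j').2
        (by norm_num) (by norm_num) (by norm_num)
    set tm : TSimp m := ⟨_, hmem⟩ with htm
    have htmj : ∀ i, (tm : Fin (m+1) → ℝ) i ≠ 0 ↔ (i = j ∨ i = j') := by
      intro i
      show ((1 : ℝ)/2) * (if i = j then 1 else 0) +
          ((1 : ℝ)/2) * (if i = j' then 1 else 0) ≠ 0 ↔ _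
      by_cases h2 : i = j'
      · subst h2
        rw [if_neg (ne_of_gt hlt), if_pos rfl]
        constructor
        · intro _; exact Or.inr rfl
        · intro _; norm_num
      · by_cases h1 : i = j
        · subst h1
          rw [if_pos rfl, if_neg h2]
          constructor
          · intro _; exact Or.inl rfl
          · intro _; norm_num
        · rw [if_neg h1, if_neg h2]
          constructor
          · intro h; exfalso; norm_num at h
          · rintro (rfl | rfl)
            · exact absurd rfl h1
            · exact absurd rfl h2
    have hkey := key_lev F F' f hf hσ tm j' ((htmj j').mpr (Or.inr rfl))
      (fun i hi => by
        rcases (htmj i).1 hi with rfl | rfl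
        · exact hσ.1 hlt.le
        · exact le_rfl)
    rw [hblock j, hblock j']
    calc flev F' (f (σ.map (vert m j))) ≤ flev F' (f (σ.map tm)) :=
          hkey.2 j ((htmj j).mpr (Or.inl rfl))
      _ = flev F' (f (σ.map (vert m j'))) := hkey.1
  · intro i
    ext t
    obtain ⟨js, hjs, hmax⟩ := exists_max_block hσ.1 t
    have hkey := key_lev F F' f hf hσ t js hjs hmax
    simp only [Set.mem_preimage, Set.mem_setOf_eq]
    constructor
    · intro hmem j hj
      rw [hblock j]
      exact le_trans (hkey.2 j hj) (flev_le_of_mem hmem)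
    · intro hall
      show f (σ.map t) ∈ F'.filt i
      rw [mem_filt_iff_flev_le, hkey.1, ← hblock js]
      exact hall js hjs

lemma pushSimp_admissible (F : FilteredSpace X) (F' : FilteredSpace Y)
    (p : Set X → ℤ) (q : Set Y → ℤ) (hp : F.IsPerversity p) (hq : F'.IsPerversity q)
    (f : C(X, Y)) (hf : FilteredSpace.IsStratifiedMap F F' ⇑f)
    (hpq : ∀ S T, F.IsStratum S → F'.IsStratum T → ⇑f '' S ⊆ T →
      F'.dualPerv q T ≤ F.dualPerv p S)
    {m : ℕ} {σ : PreSimplex X m} (hσ : σ.Admissible F p) :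
    (pushSimp F' f σ).Admissible F' q := by
  intro T' hT' t ht
  obtain ⟨S, hSdim, hyS⟩ := exists_stratumDim_mem F (σ.map t)
  obtain ⟨T, hT, hfS, hcod⟩ := hf.2 S ⟨_, hSdim⟩
  obtain ⟨ℓ, hTdim⟩ := hT
  obtain ⟨ℓ', hT'dim⟩ := hT'
  have hft : f (σ.map t) ∈ T := hfS ⟨_, hyS, rfl⟩
  have hft' : f (σ.map t) ∈ T' := ht
  have hTT : T = T' := stratum_eq_of_mem hTdim hT'dim hft hft'
  subst hTT
  have hbase := hσ S ⟨_, hSdim⟩ t hyS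
  have hdimS : F.stratumDim S = flev F (σ.map t) := stratumDim_eq hSdim
  have hdimT : F'.stratumDim T = ℓ := stratumDim_eq hTdim
  have hSbd := isStratumDim_bounds hSdim
  have hTbd := isStratumDim_bounds hTdim
  have hperv := hpq S T ⟨_, hSdim⟩ ⟨ℓ, hTdim⟩ hfS
  have hcS : F.codim S = (F.dim : ℤ) - flev F (σ.map t) := by
    rw [FilteredSpace.codim, hdimS]
  have hcT : F'.codim T = (F'.dim : ℤ) - ℓ := by
    rw [FilteredSpace.codim, hdimT]
  have hgoal : F'.codim T - q T ≤ F.codim S - p S := by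
    by_cases hTreg : F'.IsRegularStratum T
    · have hq0 : q T = 0 := hq T hTreg
      have hT0 : F'.codim T = 0 := by
        rw [hcT, (isRegular_iff_dim hTdim).1 hTreg]; ring
      by_cases hSreg : F.IsRegularStratum S
      · have hp0 : p S = 0 := hp S hSreg
        have hS0 : F.codim S = 0 := by
          rw [hcS, (isRegular_iff_dim hSdim).1 hSreg]; ring
        omega
      · have hdd := hperv
        rw [FilteredSpace.dualPerv, FilteredSpace.dualPerv, if_pos hTreg,
          if_neg hSreg] at hdd
        omega
    · by_cases hSreg : F.IsRegularStratum S
      · exfalso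
        have hS0 : F.codim S = 0 := by
          rw [hcS, (isRegular_iff_dim hSdim).1 hSreg]; ring
        have hT0 : F'.codim T = 0 := by
          have hT1 : 0 ≤ F'.codim T := by rw [hcT]; omega
          omega
        have hl : ℓ = (F'.dim : ℤ) := by rw [hcT] at hT0; omega
        exact hTreg ((isRegular_iff_dim hTdim).2 hl)
      · have hdd := hperv
        rw [FilteredSpace.dualPerv, FilteredSpace.dualPerv, if_neg hTreg,
          if_neg hSreg] at hdd
        omega
  have hgoal2 : (suppCard t : ℤ) ≤ (m : ℤ) - F.codim S + p S + 1 := hbase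
  omega

lemma pushSimp_allowable (F : FilteredSpace X) (F' : FilteredSpace Y)
    (p : Set X → ℤ) (q : Set Y → ℤ) (hp : F.IsPerversity p) (hq : F'.IsPerversity q)
    (f : C(X, Y)) (hf : FilteredSpace.IsStratifiedMap F F' ⇑f)
    (hpq : ∀ S T, F.IsStratum S → F'.IsStratum T → ⇑f '' S ⊆ T →
      F'.dualPerv q T ≤ F.dualPerv p S)
    {m : ℕ} {σ : PreSimplex X m} (hσ : Allowable F p Set.univ σ) :
    Allowable F' q Set.univ (pushSimp F' f σ) :=
  ⟨pushSimp_isFiltered F F' f hf hσ.1,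
    pushSimp_admissible F F' p q hp hq f hf hpq hσ.2.1, Set.subset_univ _⟩

lemma PreSimplex.ext' {m : ℕ} {σ τ : PreSimplex X m}
    (h1 : σ.map = τ.map) (h2 : σ.block = τ.block) : σ = τ := by
  cases σ; cases τ; cases h1; cases h2; rfl

lemma faceMap_vert (m : ℕ) (j : Fin (m+2)) (k : Fin (m+1)) :
    faceMap m j (vert m k) = vert (m+1) (j.succAbove k) := by
  apply Subtype.ext
  show Fin.insertNth j 0 (vert m k).1 = (vert (m+1) (j.succAbove k)).1
  funext i
  refine Fin.succAboveCases j ?_ ?_ i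
  · rw [Fin.insertNth_apply_same]
    show (0 : ℝ) = if j = j.succAbove k then 1 else 0
    rw [if_neg (Ne.symm (Fin.succAbove_ne j k))]
  · intro l
    rw [Fin.insertNth_apply_succAbove]
    show (if l = k then (1 : ℝ) else 0) = if j.succAbove l = j.succAbove k then 1 else 0
    simp [Fin.succAbove_right_injective.eq_iff]

lemma pushSimp_face (F' : FilteredSpace Y) (f : C(X, Y)) {m : ℕ}
    (σ : PreSimplex X (m+1)) (j : Fin (m+2)) :
    (pushSimp F' f σ).face j = pushSimp F' f (σ.face j) := by
  apply PreSimplex.ext'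
  · rfl
  · funext k
    show canonicalBlock F' (f.comp σ.map) (j.succAbove k) =
      canonicalBlock F' (f.comp (σ.map.comp (faceMap m j))) k
    unfold canonicalBlock
    rw [show (f.comp (σ.map.comp (faceMap m j))) (vert m k) =
      (f.comp σ.map) (faceMap m j (vert m k)) from rfl, faceMap_vert]

lemma pushChain_single (F' : FilteredSpace Y) (f : C(X, Y)) (G : Type w)
    [AddCommGroup G] {m : ℕ} (σ : PreSimplex X m) (g : G) :
    pushChain F' f G m (Finsupp.single σ g) = Finsupp.single (pushSimp F' f σ) g :=
  Finsupp.mapDomain_single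

lemma pushChain_bdryFrom (F' : FilteredSpace Y) (f : C(X, Y)) (G : Type w)
    [AddCommGroup G] (m : ℕ) (ξ : (filtSys X).Chains G m) :
    pushChain F' f G (m-1) ((filtSys X).bdryFrom G m ξ) =
      (filtSys Y).bdryFrom G m (pushChain F' f G m ξ) := by
  cases m with
  | zero =>
    show pushChain F' f G 0 ((0 : _ →+ _) ξ) = (0 : _ →+ _) (pushChain F' f G 0 ξ)
    rw [AddMonoidHom.zero_apply, AddMonoidHom.zero_apply, map_zero]
  | succ m =>
    show pushChain F' f G m ((filtSys X).bdry G m ξ) =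
      (filtSys Y).bdry G m (pushChain F' f G (m+1) ξ)
    have hext : (pushChain F' f G m).comp ((filtSys X).bdry G m) =
        ((filtSys Y).bdry G m).comp (pushChain F' f G (m+1)) := by
      apply Finsupp.addHom_ext
      intro σ g
      simp only [AddMonoidHom.coe_comp, Function.comp_apply]
      rw [pushChain_single, SimpSystem.bdry, SimpSystem.bdry,
        Finsupp.liftAddHom_apply_single, Finsupp.liftAddHom_apply_single,
        AddMonoidHom.finset_sum_apply, AddMonoidHom.finset_sum_apply, map_sum]
      apply Finset.sum_congr rfl
      intro j _
      rw [AddMonoidHom.smul_apply, AddMonoidHom.smul_apply, map_zsmul]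
      congr 1
      rw [Finsupp.singleAddHom_apply, Finsupp.singleAddHom_apply, pushChain_single]
      rw [show (filtSys Y).face m j (pushSimp F' f σ) = (pushSimp F' f σ).face j
        from rfl, show (filtSys X).face m j σ = σ.face j from rfl, pushSimp_face]
    exact DFunLike.congr_fun hext ξ

end AuxStratified

/-! ## STATEMENT 2 : a stratified map with `f^* D q̄ ≤ D p̄` induces a morphism of
chain complexes `f_* : C_*^{p̄}(X;G) → C_*^{q̄}(Y;G)`, `σ ↦ f ∘ σ`. -/

theorem stratified_map_induces_chain_map
    {X : Type u} {Y : Type v} [TopologicalSpace X] [TopologicalSpace Y]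
    [T2Space X] [T2Space Y]
    (F : FilteredSpace X) (F' : FilteredSpace Y)
    (hX : F.IsStratifiedSpace) (hY : F'.IsStratifiedSpace)
    (p : Set X → ℤ) (q : Set Y → ℤ) (hp : F.IsPerversity p) (hq : F'.IsPerversity q)
    (f : C(X, Y)) (hf : FilteredSpace.IsStratifiedMap F F' ⇑f)
    (hpq : ∀ S T, F.IsStratum S → F'.IsStratum T → ⇑f '' S ⊆ T →
      F'.dualPerv q T ≤ F.dualPerv p S)
    (G : Type w) [AddCommGroup G] :
    ∀ (m : ℕ) (ξ : (filtSys X).Chains G m), ξ ∈ iChains F p G Set.univ m →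
      pushChain F' f G m ξ ∈ iChains F' q G Set.univ m ∧
        pushChain F' f G (m-1) ((filtSys X).bdryFrom G m ξ) =
          (filtSys Y).bdryFrom G m (pushChain F' f G m ξ) := by
  classical
  intro m ξ hξ
  rw [iChains, AddSubgroup.mem_inf, AddSubgroup.mem_comap] at hξ
  obtain ⟨h1, h2⟩ := hξ
  have hcomm := pushChain_bdryFrom F' f G m ξ
  have hallow : ∀ {k : ℕ} (η : (filtSys X).Chains G k),
      (∀ σ ∈ η.support, Allowable F p Set.univ σ) →
      ∀ τ ∈ (pushChain F' f G k η).support, Allowable F' q Set.univ τ := by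
    intro k η hη τ hτ
    have hsupp : τ ∈ η.support.image (pushSimp F' f) :=
      Finsupp.mapDomain_support hτ
    obtain ⟨σ, hσ, rfl⟩ := Finset.mem_image.mp hsupp
    exact pushSimp_allowable F F' p q hp hq f hf hpq (hη σ hσ)
  refine ⟨?_, hcomm⟩
  rw [iChains, AddSubgroup.mem_inf, AddSubgroup.mem_comap]
  constructor
  · exact hallow ξ h1
  · rw [← hcomm]
    exact hallow ((filtSys X).bdryFrom G m ξ) h2

end
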